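/- Let c1 < 0 < c0, λ0, λ1 > 0, y0 ≤ 0, y1 = −y0, and set a = 1/c0 > 0, b = 1/c1 < 0, α = λ0/c0 > 0, β = λ1/c1 < 0, and assume α + β < 0 (i.e., λ0/c0 + λ1/c1 < 0). Define f0(t) = ((a − b e^{−y0})^{−α−β}/B(−α−β, α)) (t−a)^{α−1} (t − b e^{−y0})^{β} 1_{t > a} and f1(t) = ((a e^{−y1} − b)^{−α−β}/B(−α−β, α+1)) (t − a e^{−y1})^{α} (t − b)^{β−1} 1_{t > a e^{−y1}}. Then f0 and f1 are probability density functions, and they satisfy: for all t > a, f0(t) = α (t−a)^{α−1} ∫_{t e^{y0}}^{∞} (u e^{−y0} − a)^{−α} f1(u) du; and for all t > a e^{−y1}, f1(t) = −β (t−b)^{β−1} ∫_{a}^{t e^{y1}} (u e^{−y1} − b)^{−β} f0(u) du. -/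

import Mathlib

open MeasureTheory intervalIntegral

/-- The Beta function `B(x,y) = Γ(x)Γ(y)/Γ(x+y)`. -/
noncomputable def realBeta (x y : ℝ) : ℝ := Real.Gamma x * Real.Gamma y / Real.Gamma (x + y)

lemma realBeta_pos {x y : ℝ} (hx : 0 < x) (hy : 0 < y) : 0 < realBeta x y :=
  div_pos (mul_pos (Real.Gamma_pos_of_pos hx) (Real.Gamma_pos_of_pos hy))
    (Real.Gamma_pos_of_pos (by linarith))

lemma realBeta_symm (x y : ℝ) : realBeta x y = realBeta y x := by
  unfold realBeta; rw [mul_comm, add_comm]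

lemma realBeta_rec {x y : ℝ} (hx : 0 < x) (hy : 0 < y) :
    (x + y) * realBeta x (y + 1) = y * realBeta x y := by
  unfold realBeta
  rw [Real.Gamma_add_one hy.ne', show x + (y + 1) = (x + y) + 1 by ring,
    Real.Gamma_add_one (by positivity : (x + y) ≠ 0)]
  have h1 : Real.Gamma (x + y) ≠ 0 := (Real.Gamma_pos_of_pos (by linarith)).ne'
  field_simp

lemma integral_realBeta {p q : ℝ} (hp : 0 < p) (hq : 0 < q) :
    ∫ u in (0:ℝ)..1, u ^ (p - 1) * (1 - u) ^ (q - 1) = realBeta p q := by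
  have h := Complex.Gamma_mul_Gamma_eq_betaIntegral (s := (p:ℂ)) (t := (q:ℂ))
    (by simpa using hp) (by simpa using hq)
  have hcongr : Complex.betaIntegral (p:ℂ) (q:ℂ)
      = ((∫ u in (0:ℝ)..1, u ^ (p - 1) * (1 - u) ^ (q - 1) : ℝ) : ℂ) := by
    rw [Complex.betaIntegral, ← intervalIntegral.integral_ofReal]
    apply intervalIntegral.integral_congr
    intro x hx
    have hx' : x ∈ Set.Icc (0:ℝ) 1 := by
      simpa [Set.uIcc_of_le (zero_le_one)] using hx
    have h1x : (0:ℝ) ≤ 1 - x := by linarith [hx'.2]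
    simp only
    rw [Complex.ofReal_mul, Complex.ofReal_cpow hx'.1, Complex.ofReal_cpow h1x]
    push_cast
    ring
  rw [hcongr, Complex.Gamma_ofReal, Complex.Gamma_ofReal, show (p:ℂ) + (q:ℂ) = ((p+q : ℝ):ℂ) by push_cast; ring, Complex.Gamma_ofReal] at h
  have h' : Real.Gamma p * Real.Gamma q
      = Real.Gamma (p + q) * ∫ u in (0:ℝ)..1, u ^ (p - 1) * (1 - u) ^ (q - 1) := by
    exact_mod_cast h
  have hne : Real.Gamma (p + q) ≠ 0 := (Real.Gamma_pos_of_pos (by linarith)).ne'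
  rw [realBeta, h']
  field_simp

lemma betaPrime_integral {A C p q : ℝ} (hC : 0 < C) (hp : 0 < p) (hq : 0 < q) :
    ∫ t in Set.Ioi A, (t - A) ^ (p - 1) * (t - (A - C)) ^ (-(p + q))
      = C ^ (-q) * realBeta p q := by
  set φ : ℝ → ℝ := fun u => A + C * (u / (1 - u)) with hφ
  have him : φ '' Set.Ioo 0 1 = Set.Ioi A := by
    ext t
    constructor
    · rintro ⟨u, ⟨hu0, hu1⟩, rfl⟩
      have h1u : 0 < 1 - u := by linarith
      have : 0 < C * (u / (1 - u)) := by positivity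
      simp only [φ, Set.mem_Ioi]; linarith
    · intro ht
      rw [Set.mem_Ioi] at ht
      refine ⟨(t - A) / (t - A + C), ⟨div_pos (by linarith) (by linarith), ?_⟩, ?_⟩
      · rw [div_lt_one (by linarith)]; linarith
      · simp only [φ]
        have h1 : t - A + C ≠ 0 := by nlinarith
        field_simp
        rw [show t - A + C - (t - A) = C by ring, mul_div_cancel_left₀ _ hC.ne']; ring
  have hderiv : ∀ u ∈ Set.Ioo (0:ℝ) 1,
      HasDerivWithinAt φ (C / (1 - u) ^ 2) (Set.Ioo 0 1) u := by
    intro u hu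
    have h1u : (1 : ℝ) - u ≠ 0 := (by linarith [hu.2] : (0:ℝ) < 1 - u).ne'
    have h : HasDerivAt (fun u : ℝ => u / (1 - u))
        ((1 * (1 - u) - u * (0 - 1)) / (1 - u) ^ 2) u :=
      (hasDerivAt_id u).div ((hasDerivAt_const u (1:ℝ)).sub (hasDerivAt_id u)) h1u
    have h2 := ((h.const_mul C).const_add A).hasDerivWithinAt (s := Set.Ioo (0:ℝ) 1)
    convert h2 using 1
    · rfl
    · rfl
    · ring
  have hinj : Set.InjOn φ (Set.Ioo 0 1) := by
    intro u hu v hv h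
    have h1u : (1 : ℝ) - u ≠ 0 := (by linarith [hu.2] : (0:ℝ) < 1 - u).ne'
    have h1v : (1 : ℝ) - v ≠ 0 := (by linarith [hv.2] : (0:ℝ) < 1 - v).ne'
    simp only [φ, add_right_inj] at h
    have h' := mul_left_cancel₀ hC.ne' h
    field_simp at h'
    linarith
  rw [← him, integral_image_eq_integral_abs_deriv_smul measurableSet_Ioo hderiv hinj]
  rw [show C ^ (-q) * realBeta p q = ∫ u in (0:ℝ)..1, C ^ (-q) * (u ^ (p-1) * (1-u) ^ (q-1)) by
    rw [intervalIntegral.integral_const_mul, integral_realBeta hp hq]]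
  rw [intervalIntegral.integral_of_le zero_le_one, integral_Ioc_eq_integral_Ioo]
  apply setIntegral_congr_fun measurableSet_Ioo
  intro u hu
  obtain ⟨hu0, hu1⟩ := hu
  have hv : (0:ℝ) < 1 - u := by linarith
  simp only [φ, smul_eq_mul]
  have e1 : A + C * (u / (1 - u)) - A = C * u / (1 - u) := by ring
  have e2 : A + C * (u / (1 - u)) - (A - C) = C / (1 - u) := by
    field_simp
    ring
  have e3 : C / (1 - u) ^ 2 = Real.exp (Real.log C - 2 * Real.log (1 - u)) := by
    rw [Real.exp_sub, Real.exp_log hC, two_mul, Real.exp_add, Real.exp_log hv]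
    ring
  rw [e1, e2, abs_of_pos (by positivity), e3]
  have hb1 : (0:ℝ) < C * u / (1 - u) := by positivity
  have hb2 : (0:ℝ) < C / (1 - u) := by positivity
  rw [Real.rpow_def_of_pos hb1, Real.rpow_def_of_pos hb2, Real.rpow_def_of_pos hC,
    Real.rpow_def_of_pos hu0, Real.rpow_def_of_pos hv,
    Real.log_div (by positivity) hv.ne', Real.log_mul hC.ne' hu0.ne',
    Real.log_div hC.ne' hv.ne', ← Real.exp_add, ← Real.exp_add, ← Real.exp_add, ← Real.exp_add]
  congr 1
  ring

lemma integral_Ioi_shift_rpow {b T r : ℝ} (hr : r < -1) (hT : 0 < T - b) :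
    ∫ u in Set.Ioi T, (u - b) ^ r = -(T - b) ^ (r + 1) / (r + 1) := by
  have him : (fun x => x + b) '' Set.Ioi (T - b) = Set.Ioi T := by
    rw [Set.image_add_const_Ioi, sub_add_cancel]
  have hderiv : ∀ x ∈ Set.Ioi (T - b), HasDerivWithinAt (fun x => x + b) (1:ℝ) (Set.Ioi (T-b)) x :=
    fun x _ => ((hasDerivAt_id x).add_const b).hasDerivWithinAt
  rw [← him, integral_image_eq_integral_abs_deriv_smul measurableSet_Ioi hderiv
    ((add_left_injective b).injOn)]
  simp only [abs_one, one_smul, add_sub_cancel_right]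
  exact integral_Ioi_rpow_of_lt hr hT

lemma integral_interval_shift_rpow {a T r : ℝ} (hr : -1 < r) :
    ∫ u in a..T, (u - a) ^ r = (T - a) ^ (r + 1) / (r + 1) := by
  rw [intervalIntegral.integral_comp_sub_right (fun x => x ^ r) a, sub_self,
    integral_rpow (Or.inl hr), Real.zero_rpow (by linarith), sub_zero]

/-- Theorem 3.5 (trends of opposite signs, formulae (3.21)): under the convergence
condition `λ0/c0 + λ1/c1 < 0`, the Beta-prime-type densities of the exponential
functional of a jump-telegraph process are probability densities and solve the
coupled integral system (3.22). -/
theorem jump_telegraph_exponential_functional_opposite_signs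
    (c0 c1 l0 l1 y0 y1 : ℝ) (hc1 : c1 < 0) (hc0 : 0 < c0)
    (hl0 : 0 < l0) (hl1 : 0 < l1) (hy0 : y0 ≤ 0) (hy1 : y1 = -y0)
    (a b α β : ℝ)
    (hadef : a = 1 / c0) (hbdef : b = 1 / c1)
    (hαdef : α = l0 / c0) (hβdef : β = l1 / c1)
    (hconv : α + β < 0)
    (f0 f1 : ℝ → ℝ)
    (hf0 : ∀ t, f0 t = if a < t then
        ((a - b * Real.exp (-y0)) ^ (-(α + β)) / realBeta (-(α + β)) α)
          * (t - a) ^ (α - 1) * (t - b * Real.exp (-y0)) ^ β else 0)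
    (hf1 : ∀ t, f1 t = if a * Real.exp (-y1) < t then
        ((a * Real.exp (-y1) - b) ^ (-(α + β)) / realBeta (-(α + β)) (α + 1))
          * (t - a * Real.exp (-y1)) ^ α * (t - b) ^ (β - 1) else 0) :
    (∀ t, 0 ≤ f0 t) ∧ (∀ t, 0 ≤ f1 t) ∧
    (∫ t, f0 t = 1) ∧ (∫ t, f1 t = 1) ∧
    (∀ t, a < t →
      f0 t = α * (t - a) ^ (α - 1)
        * ∫ u in Set.Ioi (t * Real.exp y0), (u * Real.exp (-y0) - a) ^ (-α) * f1 u) ∧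
    (∀ t, a * Real.exp (-y1) < t →
      f1 t = -β * (t - b) ^ (β - 1)
        * ∫ u in a..(t * Real.exp y1), (u * Real.exp (-y1) - b) ^ (-β) * f0 u) := by
  subst hy1
  simp only [neg_neg] at hf1 ⊢
  have ha : 0 < a := by rw [hadef]; positivity
  have hb : b < 0 := by rw [hbdef]; exact div_neg_of_pos_of_neg one_pos hc1
  have hα : 0 < α := by rw [hαdef]; positivity
  have hβ : β < 0 := by rw [hβdef]; exact div_neg_of_pos_of_neg hl1 hc1
  set γ : ℝ := -(α + β) with hγdef
  have hγ : 0 < γ := by simp only [hγdef]; linarith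
  set E₀ : ℝ := Real.exp (-y0) with hE₀def
  set E₁ : ℝ := Real.exp y0 with hE₁def
  have hE₀ : 0 < E₀ := Real.exp_pos _
  have hE₁ : 0 < E₁ := Real.exp_pos _
  have hE : E₀ * E₁ = 1 := by
    rw [hE₀def, hE₁def, ← Real.exp_add, neg_add_cancel, Real.exp_zero]
  have hbE₀ : b * E₀ < 0 := mul_neg_of_neg_of_pos hb hE₀
  have hab0 : 0 < a - b * E₀ := by linarith
  have haE₁ : 0 < a * E₁ := mul_pos ha hE₁
  have hA1b : 0 < a * E₁ - b := by linarith
  have hBa : (0:ℝ) < realBeta γ α := realBeta_pos hγ hα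
  have hBb : (0:ℝ) < realBeta γ (α + 1) := realBeta_pos hγ (by linarith)
  have hgb : γ + α = -β := by simp only [hγdef]; ring
  have hBrel : (-β) * realBeta γ (α + 1) = α * realBeta γ α := by
    rw [← hgb]; exact realBeta_rec hγ hα
  -- nonnegativity
  have hnn0 : ∀ t, 0 ≤ f0 t := by
    intro t
    rw [hf0 t]
    split_ifs with h
    · have h1 : (0:ℝ) ≤ t - a := by linarith
      have h2 : (0:ℝ) ≤ t - b * E₀ := by linarith
      exact mul_nonneg (mul_nonneg (div_nonneg (Real.rpow_nonneg hab0.le _) hBa.le)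
        (Real.rpow_nonneg h1 _)) (Real.rpow_nonneg h2 _)
    · exact le_refl 0
  have hnn1 : ∀ t, 0 ≤ f1 t := by
    intro t
    rw [hf1 t]
    split_ifs with h
    · have h1 : (0:ℝ) ≤ t - a * E₁ := by linarith
      have h2 : (0:ℝ) ≤ t - b := by linarith
      exact mul_nonneg (mul_nonneg (div_nonneg (Real.rpow_nonneg hA1b.le _) hBb.le)
        (Real.rpow_nonneg h1 _)) (Real.rpow_nonneg h2 _)
    · exact le_refl 0
  refine ⟨hnn0, hnn1, ?_, ?_, ?_, ?_⟩
  · -- ∫ f0 = 1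
    have hstep : ∫ t, f0 t = ∫ t in Set.Ioi a,
        ((a - b * E₀) ^ γ / realBeta γ α) * ((t - a) ^ (α - 1) * (t - b * E₀) ^ β) := by
      rw [← MeasureTheory.integral_indicator measurableSet_Ioi]
      congr 1
      ext t
      rw [hf0 t]
      simp only [Set.indicator_apply, Set.mem_Ioi, mul_assoc]
    have hint := betaPrime_integral (A := a) (C := a - b * E₀) hab0 hα hγ
    have heq : ∀ t : ℝ, (t - a) ^ (α - 1) * (t - (a - (a - b * E₀))) ^ (-(α + γ))
        = (t - a) ^ (α - 1) * (t - b * E₀) ^ β := by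
      intro t
      rw [show a - (a - b * E₀) = b * E₀ by ring, show -(α + γ) = β by simp only [hγdef]; ring]
    simp only [heq] at hint
    rw [hstep, MeasureTheory.integral_const_mul, hint, realBeta_symm α γ]
    calc (a - b * E₀) ^ γ / realBeta γ α * ((a - b * E₀) ^ (-γ) * realBeta γ α)
        = ((a - b * E₀) ^ γ * (a - b * E₀) ^ (-γ)) * (realBeta γ α / realBeta γ α) := by ring
      _ = 1 := by rw [← Real.rpow_add hab0, div_self hBa.ne']; simp
  · -- ∫ f1 = 1
    have hstep : ∫ t, f1 t = ∫ t in Set.Ioi (a * E₁),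
        ((a * E₁ - b) ^ γ / realBeta γ (α + 1)) * ((t - a * E₁) ^ α * (t - b) ^ (β - 1)) := by
      rw [← MeasureTheory.integral_indicator measurableSet_Ioi]
      congr 1
      ext t
      rw [hf1 t]
      simp only [Set.indicator_apply, Set.mem_Ioi, mul_assoc]
    have hint := betaPrime_integral (A := a * E₁) (C := a * E₁ - b) hA1b (by linarith : (0:ℝ) < α + 1) hγ
    have heq : ∀ t : ℝ, (t - a * E₁) ^ (α + 1 - 1) * (t - (a * E₁ - (a * E₁ - b))) ^ (-(α + 1 + γ))
        = (t - a * E₁) ^ α * (t - b) ^ (β - 1) := by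
      intro t
      rw [show a * E₁ - (a * E₁ - b) = b by ring, show -(α + 1 + γ) = β - 1 by simp only [hγdef]; ring,
        show α + 1 - 1 = α by ring]
    simp only [heq] at hint
    rw [hstep, MeasureTheory.integral_const_mul, hint, realBeta_symm (α + 1) γ]
    calc (a * E₁ - b) ^ γ / realBeta γ (α + 1) * ((a * E₁ - b) ^ (-γ) * realBeta γ (α + 1))
        = ((a * E₁ - b) ^ γ * (a * E₁ - b) ^ (-γ)) * (realBeta γ (α + 1) / realBeta γ (α + 1)) := by
          ring
      _ = 1 := by rw [← Real.rpow_add hA1b, div_self hBb.ne']; simp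
  · -- integral equation for f0
    intro t ht
    have ht0 : 0 < t := lt_trans ha ht
    have hT : a * E₁ < t * E₁ := by exact mul_lt_mul_of_pos_right ht hE₁
    have hstep : ∫ u in Set.Ioi (t * E₁), (u * E₀ - a) ^ (-α) * f1 u
        = ∫ u in Set.Ioi (t * E₁),
          ((a * E₁ - b) ^ γ / realBeta γ (α + 1) * Real.exp (y0 * α)) * (u - b) ^ (β - 1) := by
      apply setIntegral_congr_fun measurableSet_Ioi
      intro u hu
      dsimp only
      rw [Set.mem_Ioi] at hu
      have hu1 : a * E₁ < u := lt_trans hT hu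
      have hupos : 0 < u * E₀ - a := by
        have h1 : t * E₁ * E₀ < u * E₀ := mul_lt_mul_of_pos_right hu hE₀
        have h2 : t * E₁ * E₀ = t := by rw [mul_assoc, mul_comm E₁ E₀, hE, mul_one]
        linarith
      rw [hf1 u, if_pos hu1]
      have hsub : u - a * E₁ = E₁ * (u * E₀ - a) := by linear_combination (-u) * hE
      have hpow : (u - a * E₁) ^ α = Real.exp (y0 * α) * (u * E₀ - a) ^ α := by
        rw [hsub, Real.mul_rpow hE₁.le hupos.le, hE₁def, ← Real.exp_mul]
      have hx : (u * E₀ - a) ^ (-α) * (u * E₀ - a) ^ α = 1 := by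
        rw [← Real.rpow_add hupos]; simp
      rw [hpow]
      linear_combination ((a * E₁ - b) ^ γ / realBeta γ (α + 1) * Real.exp (y0 * α)
        * (u - b) ^ (β - 1)) * hx
    rw [hstep, MeasureTheory.integral_const_mul, integral_Ioi_shift_rpow (by linarith : β - 1 < -1)
      (by nlinarith : 0 < t * E₁ - b), show β - 1 + 1 = β by ring]
    rw [hf0 t, if_pos ht]
    have h1 : (t * E₁ - b) ^ β = Real.exp (y0 * β) * (t - b * E₀) ^ β := by
      rw [show t * E₁ - b = E₁ * (t - b * E₀) by linear_combination b * hE,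
        Real.mul_rpow hE₁.le (by linarith : (0:ℝ) ≤ t - b * E₀), hE₁def, ← Real.exp_mul]
    have h2 : (a * E₁ - b) ^ γ = Real.exp (y0 * γ) * (a - b * E₀) ^ γ := by
      rw [show a * E₁ - b = E₁ * (a - b * E₀) by linear_combination b * hE,
        Real.mul_rpow hE₁.le hab0.le, hE₁def, ← Real.exp_mul]
    have hEprod : Real.exp (y0 * α) * Real.exp (y0 * β) * Real.exp (y0 * γ) = 1 := by
      rw [← Real.exp_add, ← Real.exp_add, show y0 * α + y0 * β + y0 * γ = 0 by
        simp only [hγdef]; ring, Real.exp_zero]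
    rw [h1, h2]
    field_simp [hBa.ne', hBb.ne', hβ.ne]
    rw [mul_comm y0 α] at hEprod
    linear_combination (α * (t - a) ^ (α - 1) * (t - b * E₀) ^ β
        * realBeta γ α) * hEprod
      - ((t - a) ^ (α - 1) * (t - b * E₀) ^ β) * hBrel
  · -- integral equation for f1
    intro t ht
    have hT : a < t * E₀ := by
      have h1 : a * E₁ * E₀ < t * E₀ := mul_lt_mul_of_pos_right ht hE₀
      have h2 : a * E₁ * E₀ = a := by rw [mul_assoc, mul_comm E₁ E₀, hE, mul_one]
      linarith
    have ht0 : 0 < t := lt_trans haE₁ ht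
    have hstep : ∫ u in a..(t * E₀), (u * E₁ - b) ^ (-β) * f0 u
        = ∫ u in a..(t * E₀),
          ((a - b * E₀) ^ γ / realBeta γ α * Real.exp (-y0 * β)) * (u - a) ^ (α - 1) := by
      apply intervalIntegral.integral_congr_ae
      apply Filter.Eventually.of_forall
      intro u hu
      rw [Set.uIoc_of_le hT.le, Set.mem_Ioc] at hu
      have hua : a < u := hu.1
      have hub : 0 < u * E₁ - b := by nlinarith
      rw [hf0 u, if_pos hua]
      have hsub : u - b * E₀ = E₀ * (u * E₁ - b) := by linear_combination (-u) * hE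
      have hpow : (u - b * E₀) ^ β = Real.exp (-y0 * β) * (u * E₁ - b) ^ β := by
        rw [hsub, Real.mul_rpow hE₀.le hub.le, hE₀def, ← Real.exp_mul]
      have hx : (u * E₁ - b) ^ (-β) * (u * E₁ - b) ^ β = 1 := by
        rw [← Real.rpow_add hub]; simp
      rw [hpow]
      linear_combination ((a - b * E₀) ^ γ / realBeta γ α * Real.exp (-y0 * β)
        * (u - a) ^ (α - 1)) * hx
    rw [hstep, intervalIntegral.integral_const_mul,
      integral_interval_shift_rpow (by linarith : (-1:ℝ) < α - 1), show α - 1 + 1 = α by ring]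
    rw [hf1 t, if_pos ht]
    have h1 : (t * E₀ - a) ^ α = Real.exp (-y0 * α) * (t - a * E₁) ^ α := by
      rw [show t * E₀ - a = E₀ * (t - a * E₁) by linear_combination a * hE,
        Real.mul_rpow hE₀.le (by linarith : (0:ℝ) ≤ t - a * E₁), hE₀def, ← Real.exp_mul]
    have h2 : (a * E₁ - b) ^ γ = Real.exp (y0 * γ) * (a - b * E₀) ^ γ := by
      rw [show a * E₁ - b = E₁ * (a - b * E₀) by linear_combination b * hE,
        Real.mul_rpow hE₁.le hab0.le, hE₁def, ← Real.exp_mul]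
    have hEprod : Real.exp (-(y0 * β)) * Real.exp (-(y0 * α)) = Real.exp (y0 * γ) := by
      rw [← Real.exp_add, show -(y0 * β) + -(y0 * α) = y0 * γ by simp only [hγdef]; ring]
    rw [h1, h2]
    field_simp [hBa.ne', hBb.ne', hβ.ne]
    linear_combination (β * (t - a * E₁) ^ α * (t - b) ^ (β - 1)
        * realBeta γ (α + 1)) * hEprod
      - ((t - a * E₁) ^ α * (t - b) ^ (β - 1) * Real.exp (y0 * γ)) * hBrel
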